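/- There exists a countably infinite topological space Y (the lower-set topology of a countable poset in which every element has finite height) such that Y is contractible, the homeomorphism group of Y is isomorphic to the symmetric group on a countably infinite set, and any two homeomorphisms of Y are isotopic if and only if they are equal; in particular the mapping class group of Y is isomorphic to Sym(ℕ). -/

import Mathlib

open unitInterval

/-- An isotopy between homeomorphisms `f` and `g` of `X`: a continuous map
`H : X × [0,1] → X` with `H(·,0) = f`, `H(·,1) = g`, and `H(·,t)` a
homeomorphism for every `t`. -/
def Isotopy {X : Type*} [TopologicalSpace X] (f g : X ≃ₜ X) : Prop :=
  ∃ H : X × I → X, Continuous H ∧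
    (∀ x, H (x, 0) = f x) ∧
    (∀ x, H (x, 1) = g x) ∧
    ∀ t : I, ∃ h : X ≃ₜ X, ∀ x, H (x, t) = h x

namespace Stmt12

/-- The poset: a bottom element `none` below an infinite antichain `some n`. -/
abbrev Y : Type := Option ℕ

instance instPO : PartialOrder Y where
  le a b := a = b ∨ a = none
  lt a b := (a = b ∨ a = none) ∧ ¬(b = a ∨ b = none)
  lt_iff_le_not_ge _ _ := Iff.rfl
  le_refl a := Or.inl rfl
  le_trans a b c h1 h2 := by
    rcases h1 with rfl | rfl
    · exact h2
    · exact Or.inr rfl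
  le_antisymm a b h1 h2 := by
    rcases h1 with rfl | rfl
    · rfl
    · rcases h2 with rfl | rfl <;> rfl

instance instLEY : LE Y := instPO.toLE

lemma le_iff {a b : Y} : a ≤ b ↔ a = b ∨ a = none := Iff.rfl

lemma none_le (a : Y) : (none : Y) ≤ a := Or.inr rfl

lemma lt_none {a b : Y} (h1 : a ≤ b) (h2 : a ≠ b) : a = none := by
  rcases h1 with rfl | rfl
  · exact absurd rfl h2
  · rfl

instance instTop : TopologicalSpace Y where
  IsOpen s := IsLowerSet s
  isOpen_univ := isLowerSet_univ
  isOpen_inter _ _ := IsLowerSet.inter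
  isOpen_sUnion _S hS := isLowerSet_sUnion hS

lemma isOpen_iff {s : Set Y} : IsOpen s ↔ IsLowerSet s := Iff.rfl

lemma none_mem_of_open {s : Set Y} (hs : IsOpen s) {a : Y} (ha : a ∈ s) :
    (none : Y) ∈ s := hs (none_le a) ha

lemma isOpen_none : IsOpen ({none} : Set Y) := by
  intro a b hba ha
  simp only [Set.mem_singleton_iff] at ha ⊢
  subst ha
  rcases hba with rfl | rfl <;> rfl

lemma isOpen_pair (m : ℕ) : IsOpen ({none, some m} : Set Y) := by
  intro a b hba ha
  rcases hba with rfl | rfl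
  · exact ha
  · exact Or.inl rfl

lemma isOpen_compl_some (m : ℕ) : IsOpen ({some m}ᶜ : Set Y) := by
  intro a b hba ha
  rcases hba with rfl | rfl
  · exact ha
  · simp

/-- Any self-map fixing `none` is continuous. -/
lemma continuous_of_none {h : Y → Y} (h0 : h none = none) : Continuous h := by
  rw [continuous_def]
  intro s hs
  intro a b hba ha
  rcases hba with rfl | rfl
  · exact ha
  · show h none ∈ s
    rw [h0]
    exact none_mem_of_open hs ha

/-- Every homeomorphism of `Y` fixes `none`. -/
lemma homeo_none (f : Y ≃ₜ Y) : f none = none := by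
  have hopen : IsOpen (f.symm ⁻¹' {none}) := f.continuous_symm.isOpen_preimage _ isOpen_none
  have hmem : f none ∈ f.symm ⁻¹' {none} := by simp
  have := none_mem_of_open hopen hmem
  have : f.symm (none : Y) = none := this
  calc f none = f (f.symm none) := by rw [this]
    _ = none := f.apply_symm_apply none

lemma homeo_some_ne (f : Y ≃ₜ Y) (n : ℕ) : f (some n) ≠ none := by
  intro h
  have := homeo_none f
  exact Option.some_ne_none n (f.injective (h.trans this.symm))

/-- The homeomorphism of `Y` induced by a permutation of `ℕ`. -/
def homeoOfPerm (sg : Equiv.Perm ℕ) : Y ≃ₜ Y where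
  toEquiv := sg.optionCongr
  continuous_toFun := continuous_of_none (by simp)
  continuous_invFun := continuous_of_none (by simp)

lemma removeNone_spec (f : Y ≃ₜ Y) (n : ℕ) :
    some (Equiv.removeNone f.toEquiv n) = f (some n) :=
  Equiv.removeNone_some _ (Option.ne_none_iff_exists'.mp (homeo_some_ne f n))

/-- The isomorphism between the homeomorphism group of `Y` and `Sym(ℕ)`. -/
def permEquiv : (Y ≃ₜ Y) ≃ Equiv.Perm ℕ where
  toFun f := Equiv.removeNone f.toEquiv
  invFun := homeoOfPerm
  left_inv f := by
    apply Homeomorph.ext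
    intro x
    cases x with
    | none =>
      show (Equiv.removeNone f.toEquiv).optionCongr none = f none
      rw [homeo_none f]; rfl
    | some n =>
      show some (Equiv.removeNone f.toEquiv n) = f (some n)
      exact removeNone_spec f n
  right_inv sg := by
    show Equiv.removeNone (homeoOfPerm sg).toEquiv = sg
    exact Equiv.removeNone_optionCongr sg

lemma permEquiv_mul (f g : Y ≃ₜ Y) :
    permEquiv (g.trans f) = permEquiv f * permEquiv g := by
  apply Equiv.ext
  intro n
  apply Option.some_injective
  show some (Equiv.removeNone (g.trans f).toEquiv n)
      = some (Equiv.removeNone f.toEquiv (Equiv.removeNone g.toEquiv n))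
  rw [removeNone_spec (g.trans f) n, removeNone_spec f (Equiv.removeNone g.toEquiv n),
    removeNone_spec g n]
  rfl

lemma contractible : ContractibleSpace Y := by
  rw [contractible_iff_id_nullhomotopic]
  refine ⟨none, ⟨?_⟩⟩
  have hone : (1 : I) ≠ 0 := by
    intro h
    have := congrArg Subtype.val h
    norm_num at this
  refine ⟨⟨fun p => if p.1 = 0 then p.2 else none, ?_⟩, ?_, ?_⟩
  · rw [continuous_def]
    intro s hs
    by_cases h0 : (none : Y) ∈ s
    · have : (fun p : I × Y => if p.1 = 0 then p.2 else none) ⁻¹' s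
          = ({0}ᶜ ×ˢ Set.univ) ∪ (Set.univ ×ˢ s) := by
        ext ⟨t, x⟩
        by_cases ht : t = 0 <;> simp [ht, h0]
      rw [this]
      exact ((isClosed_singleton.isOpen_compl).prod isOpen_univ).union
        (isOpen_univ.prod hs)
    · have : s = ∅ := by
        ext y
        simp only [Set.mem_empty_iff_false, iff_false]
        intro hy
        exact h0 (none_mem_of_open hs hy)
      subst this
      simp
  · intro x; simp
  · intro x; simp [hone]

lemma height_ne_top (a : Y) : Order.height a ≠ ⊤ := by
  have h : Order.height a ≤ 1 := by
    apply Order.height_le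
    intro p _
    by_contra hlen
    push_neg at hlen
    have h1 : (1 : ℕ) < p.length := by exact_mod_cast hlen
    have h01 := p.strictMono (a := ⟨0, by omega⟩) (b := ⟨1, by omega⟩)
      (Fin.mk_lt_mk.mpr (by omega))
    have h12 := p.strictMono (a := ⟨1, by omega⟩) (b := ⟨2, by omega⟩)
      (Fin.mk_lt_mk.mpr (by omega))
    have e0 := lt_none h01.le h01.ne
    have e1 := lt_none h12.le h12.ne
    rw [e0, e1] at h01
    exact lt_irrefl _ h01
  intro htop
  rw [htop] at h
  exact absurd h (by simp)

lemma isotopy_iff_eq (f g : Y ≃ₜ Y) : Isotopy f g ↔ f = g := by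
  constructor
  · rintro ⟨H, hcont, h0, h1, hhomeo⟩
    apply Homeomorph.ext
    intro x
    cases x with
    | none => rw [homeo_none f, homeo_none g]
    | some n =>
      -- the path t ↦ H (some n, t) avoids `none`
      have hne : ∀ t : I, H (some n, t) ≠ none := by
        intro t ht
        obtain ⟨h, hh⟩ := hhomeo t
        rw [hh] at ht
        exact homeo_some_ne h n ht
      set c : I → Y := fun t => H (some n, t) with hc
      have hccont : Continuous c := hcont.comp (by continuity)
      obtain ⟨m, hm⟩ : ∃ m, c 0 = some m := Option.ne_none_iff_exists'.mp (hne 0)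
      obtain ⟨k, hk⟩ : ∃ k, c 1 = some k := Option.ne_none_iff_exists'.mp (hne 1)
      have hmk : m = k := by
        by_contra hne'
        have hA : IsOpen (c ⁻¹' {none, some m}) :=
          hccont.isOpen_preimage _ (isOpen_pair m)
        have hB : IsOpen (c ⁻¹' ({some m}ᶜ)) :=
          hccont.isOpen_preimage _ (isOpen_compl_some m)
        have hcover : (Set.univ : Set I) ⊆ (c ⁻¹' {none, some m}) ∪ (c ⁻¹' ({some m}ᶜ)) := by
          intro t _
          by_cases h : c t = some m
          · exact Or.inl (Or.inr h)
          · exact Or.inr h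
        have h0A : ((Set.univ : Set I) ∩ (c ⁻¹' {none, some m})).Nonempty :=
          ⟨0, trivial, Or.inr hm⟩
        have h1B : ((Set.univ : Set I) ∩ (c ⁻¹' ({some m}ᶜ))).Nonempty := by
          refine ⟨1, trivial, ?_⟩
          simp only [Set.mem_preimage, Set.mem_compl_iff, Set.mem_singleton_iff, hk]
          intro h
          exact hne' (Option.some_injective _ h.symm)
        obtain ⟨t, _, htA, htB⟩ :=
          isPreconnected_univ _ _ hA hB hcover h0A h1B
        rcases htA with h | h
        · exact hne t h
        · exact htB h
      have := h0 (some n)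
      have := h1 (some n)
      calc f (some n) = c 0 := (h0 (some n)).symm
        _ = some m := hm
        _ = some k := by rw [hmk]
        _ = c 1 := hk.symm
        _ = g (some n) := h1 (some n)
  · rintro rfl
    exact ⟨fun p => f p.1, f.continuous.comp continuous_fst,
      fun x => rfl, fun x => rfl, fun t => ⟨f, fun x => rfl⟩⟩

end Stmt12

/-- There is a countably infinite, contractible topological space
`Y` (the lower-set topology of a countable poset all of whose elements have
finite height) whose homeomorphism group is isomorphic to `Sym(ℕ)` and in which
two homeomorphisms are isotopic iff they are equal; in particular the mapping
class group of `Y` is `Sym(ℕ)`. -/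
theorem stmt_12 :
    ∃ (Y : Type) (_ : PartialOrder Y) (_ : TopologicalSpace Y),
      Countable Y ∧ Infinite Y ∧
      (∀ s : Set Y, IsOpen s ↔ IsLowerSet s) ∧
      (∀ a : Y, Order.height a ≠ ⊤) ∧
      ContractibleSpace Y ∧
      (∃ e : (Y ≃ₜ Y) ≃ Equiv.Perm ℕ, ∀ f g : Y ≃ₜ Y, e (g.trans f) = e f * e g) ∧
      (∀ f g : Y ≃ₜ Y, Isotopy f g ↔ f = g) := by
  exact ⟨Stmt12.Y, Stmt12.instPO, Stmt12.instTop,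
    inferInstance, inferInstance,
    fun s => Stmt12.isOpen_iff,
    Stmt12.height_ne_top,
    Stmt12.contractible,
    ⟨Stmt12.permEquiv, Stmt12.permEquiv_mul⟩,
    Stmt12.isotopy_iff_eq⟩
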